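/- arXiv:1209.0604 — 3 statements merged into one kernel-verified Lean document; each statement's English description precedes it below -/
import Mathlib

section
/- For integers r >= 1 and m >= r+1, sum_{n=1}^infty h_n^(r)/n^m = sum_{n=1}^infty h_n^(r-1) * zeta(m, n), where zeta(m, n) = sum_{j=0}^infty 1/(j+n)^m is the Hurwitz zeta function and h_n^(0) = 1/n. -/
open scoped BigOperators

noncomputable def H (n : ℕ) : ℝ := ∑ k ∈ Finset.range n, (1 : ℝ) / (k + 1)

noncomputable def h : ℕ → ℕ → ℝ
  | 0, n => 1 / n
  | r + 1, n => ∑ k ∈ Finset.range n, h r (k + 1)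

noncomputable def zeta (m : ℕ) : ℝ := ∑' n : ℕ, (1 : ℝ) / ((n : ℝ) + 1) ^ m

noncomputable def hzeta (m k : ℕ) : ℝ := ∑' j : ℕ, (1 : ℝ) / ((j : ℝ) + k) ^ m

noncomputable def zetaH (m : ℕ) : ℝ := ∑' n : ℕ, H (n + 1) / ((n : ℝ) + 1) ^ m

def stirling1 : ℕ → ℕ → ℕ
  | 0, 0 => 1
  | 0, _ + 1 => 0
  | _ + 1, 0 => 0
  | n + 1, k + 1 => stirling1 n k + n * stirling1 n (k + 1)

lemma h_nonneg (r n : ℕ) : 0 ≤ h r n := by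
  induction r generalizing n with
  | zero => simp only [h]; positivity
  | succ r ih => exact Finset.sum_nonneg fun k _ => ih _

lemma summable_shift (m k : ℕ) (hm : 2 ≤ m) :
    Summable fun j : ℕ => (1 : ℝ) / ((j : ℝ) + (k + 1)) ^ m := by
  have h1 : Summable fun j : ℕ => (1 : ℝ) / ((j : ℝ) + 1) ^ m := by
    have := (Real.summable_one_div_nat_pow (p := m)).mpr (by omega)
    have := (summable_nat_add_iff 1).mpr this
    exact this.congr fun j => by push_cast; ring_nf
  refine Summable.of_nonneg_of_le (fun j => by positivity) (fun j => ?_) h1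
  have hb : (0:ℝ) < ((j:ℝ)+1)^m := by positivity
  apply one_div_le_one_div_of_le hb
  apply pow_le_pow_left₀ (by positivity)
  linarith [Nat.cast_nonneg (α := ℝ) k]

/-- nonneg real tsum via ENNReal -/
lemma tsum_ofReal_toReal {f : ℕ → ℝ} (hf : ∀ n, 0 ≤ f n) :
    ∑' n, f n = (∑' n, ENNReal.ofReal (f n)).toReal := by
  rw [ENNReal.tsum_toReal_eq (fun n => ENNReal.ofReal_ne_top)]
  exact tsum_congr fun n => (ENNReal.toReal_ofReal (hf n)).symm

theorem stmt5 (r m : ℕ) (hr : 1 ≤ r) (hm : r + 1 ≤ m) :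
    ∑' n : ℕ, h r (n + 1) / ((n : ℝ) + 1) ^ m =
      ∑' n : ℕ, h (r - 1) (n + 1) * hzeta m (n + 1) := by
  obtain ⟨s, rfl⟩ : ∃ s, r = s + 1 := ⟨r - 1, by omega⟩
  have hm2 : 2 ≤ m := by omega
  simp only [Nat.add_sub_cancel]
  set a : ℕ → ℝ := fun k => h s (k + 1) with ha
  have hapos : ∀ k, 0 ≤ a k := fun k => h_nonneg s (k + 1)
  -- hzeta as a tsum of nonneg summable family
  have hzsum : ∀ k : ℕ, Summable fun j : ℕ => (1 : ℝ) / ((j : ℝ) + (k + 1)) ^ m :=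
    fun k => summable_shift m k hm2
  have hznn : ∀ k : ℕ, 0 ≤ hzeta m (k + 1) := fun k =>
    tsum_nonneg fun j => by positivity
  -- ENNReal versions
  have lhs_eq : ∑' n : ℕ, h (s + 1) (n + 1) / ((n : ℝ) + 1) ^ m
      = (∑' n : ℕ, ENNReal.ofReal (h (s + 1) (n + 1) / ((n : ℝ) + 1) ^ m)).toReal :=
    tsum_ofReal_toReal fun n => by
      have := h_nonneg (s + 1) (n + 1); positivity
  have rhs_eq : ∑' n : ℕ, a n * hzeta m (n + 1)
      = (∑' n : ℕ, ENNReal.ofReal (a n * hzeta m (n + 1))).toReal :=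
    tsum_ofReal_toReal fun n => mul_nonneg (hapos n) (hznn n)
  rw [lhs_eq, rhs_eq]
  congr 1
  -- key ENNReal computation
  -- define the double family with indicator
  have key : ∀ n : ℕ, ENNReal.ofReal (h (s + 1) (n + 1) / ((n : ℝ) + 1) ^ m)
      = ∑' k : ℕ, (if k ≤ n then ENNReal.ofReal (a k / ((n : ℝ) + 1) ^ m) else 0) := by
    intro n
    have hsplit : h (s + 1) (n + 1) / ((n : ℝ) + 1) ^ m
        = ∑ k ∈ Finset.range (n + 1), a k / ((n : ℝ) + 1) ^ m := by
      show (∑ k ∈ Finset.range (n + 1), h s (k + 1)) / _ = _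
      rw [Finset.sum_div]
    rw [hsplit, ENNReal.ofReal_sum_of_nonneg (fun k _ => by
      have := hapos k; positivity)]
    rw [tsum_eq_sum (s := Finset.range (n + 1)) (fun k hk => by
      simp only [Finset.mem_range] at hk
      rw [if_neg (by omega)])]
    exact Finset.sum_congr rfl fun k hk => by
      simp only [Finset.mem_range] at hk
      rw [if_pos (by omega)]
  calc ∑' n : ℕ, ENNReal.ofReal (h (s + 1) (n + 1) / ((n : ℝ) + 1) ^ m)
      = ∑' (n : ℕ) (k : ℕ), (if k ≤ n then ENNReal.ofReal (a k / ((n : ℝ) + 1) ^ m) else 0) :=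
        tsum_congr key
    _ = ∑' (k : ℕ) (n : ℕ), (if k ≤ n then ENNReal.ofReal (a k / ((n : ℝ) + 1) ^ m) else 0) :=
        ENNReal.tsum_comm
    _ = ∑' n : ℕ, ENNReal.ofReal (a n * hzeta m (n + 1)) := by
        refine tsum_congr fun k => ?_
        -- shift : sum over n of indicator equals sum over j with n = j + k
        have hinj : Function.Injective (fun j : ℕ => j + k) := fun x y hxy => by simpa using hxy
        have hshift : ∑' (n : ℕ), (if k ≤ n then ENNReal.ofReal (a k / ((n : ℝ) + 1) ^ m) else 0)
            = ∑' j : ℕ, ENNReal.ofReal (a k / (((j + k : ℕ) : ℝ) + 1) ^ m) := by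
          rw [← hinj.tsum_eq (f := fun n : ℕ =>
            (if k ≤ n then ENNReal.ofReal (a k / ((n : ℝ) + 1) ^ m) else 0)) ?_]
          · exact tsum_congr fun j => by rw [if_pos (by omega)]
          · intro n hn
            rcases le_or_gt k n with hle | hlt
            · exact ⟨n - k, by simp; omega⟩
            · simp only [Function.mem_support] at hn
              rw [if_neg (by omega)] at hn
              exact absurd rfl hn
        rw [hshift]
        -- now compute the RHS
        have : hzeta m (k + 1) = ∑' j : ℕ, (1 : ℝ) / ((j : ℝ) + (k + 1)) ^ m := by
          unfold hzeta; push_cast; rfl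
        rw [this, ← tsum_mul_left,
          ENNReal.ofReal_tsum_of_nonneg
            (fun j => mul_nonneg (hapos k) (by positivity)) ((hzsum k).mul_left _)]
        exact tsum_congr fun j => by
          congr 1
          push_cast
          rw [mul_one_div]
          ring_nf
end

section
/- For positive integers r and n, h_n^(r+1) = (1/r!) * sum_{k=1}^{r+1} [r+1 choose k]_1 * n^{k-1} * (H_{n+r} - H_r), where [.]_1 are unsigned Stirling numbers of the first kind. -/
open scoped BigOperators

lemma H_succ (n : ℕ) : H (n+1) = H n + 1/((n:ℝ)+1) := by
  simp [H, Finset.sum_range_succ]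

lemma h_one (n : ℕ) : h 1 n = H n := by
  simp [h, H]

lemma aux_arith (r n a b c X Hr : ℝ)
    (d1 : r + 1 ≠ 0) (d2 : n + r + 2 ≠ 0)
    (pascal : c = b + a)
    (key2 : (b + a) * (r + 1) = b * (n + r + 2)) :
    a*(X - (Hr + 1/(r+1))) + b*(X - Hr)
      = c*(X + 1/(n+r+2) - (Hr + 1/(r+1))) := by
  rw [pascal]
  field_simp
  ring_nf
  linear_combination (-1 : ℝ) * key2

lemma key : ∀ r n : ℕ, h (r+1) n = ((n+r).choose r : ℝ) * (H (n+r) - H r) := by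
  intro r
  induction r with
  | zero => intro n; simp [h_one, H]
  | succ r ih =>
    intro n
    induction n with
    | zero => simp [h]
    | succ n ihn =>
      have hstep : h (r+2) (n+1) = h (r+2) n + h (r+1) (n+1) := by
        show (∑ k ∈ Finset.range (n+1), h (r+1) (k+1)) = _
        rw [Finset.sum_range_succ]; rfl
      rw [hstep, ihn, ih]
      have pascal : ((n+(r+1)+1).choose (r+1) : ℝ)
          = ((n+(r+1)).choose r : ℝ) + ((n+(r+1)).choose (r+1) : ℝ) := by
        exact_mod_cast Nat.choose_succ_succ (n+(r+1)) r
      have key2 : (((n+(r+1)).choose r : ℝ) + ((n+(r+1)).choose (r+1) : ℝ)) * ((r:ℝ)+1)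
          = ((n+(r+1)).choose r : ℝ) * ((n:ℝ)+(r:ℝ)+2) := by
        have h2 : (((n+(r+1)+1) * (n+(r+1)).choose r : ℕ) : ℝ)
            = (((n+(r+1)+1).choose (r+1) * (r+1) : ℕ) : ℝ) := by
          exact_mod_cast congrArg (fun x => ((x:ℕ):ℝ)) (Nat.add_one_mul_choose_eq (n+(r+1)) r)
        push_cast at h2
        linear_combination -h2 - ((r:ℝ)+1)*pascal
      have e1 : n+1+(r+1) = (n+(r+1))+1 := by ring
      have e2 : (n+1)+r = n+(r+1) := by ring
      have e4 : ((n+(r+1):ℕ):ℝ)+1 = (n:ℝ)+(r:ℝ)+2 := by push_cast; ring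
      rw [e1, e2, H_succ (n+(r+1)), H_succ r, e4]
      exact aux_arith (r:ℝ) (n:ℝ) _ _ _ _ _ (by positivity) (by positivity)
        pascal key2

lemma stirling1_eq_zero : ∀ m k : ℕ, m < k → stirling1 m k = 0 := by
  intro m
  induction m with
  | zero => intro k hk; cases k with
    | zero => omega
    | succ k => rfl
  | succ m ih =>
    intro k hk
    cases k with
    | zero => omega
    | succ k =>
      show stirling1 m k + m * stirling1 m (k+1) = 0
      rw [ih k (by omega), ih (k+1) (by omega)]; ring

lemma stirlingP (m : ℕ) (x : ℝ) :
    ∑ k ∈ Finset.range (m+1), (stirling1 m k : ℝ) * x^k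
      = ∏ i ∈ Finset.range m, (x + i) := by
  induction m with
  | zero => simp [stirling1]
  | succ m ih =>
    rw [Finset.prod_range_succ, ← ih]
    rw [Finset.sum_range_succ' (fun k => (stirling1 (m+1) k : ℝ) * x^k) (m+1)]
    have h0 : (stirling1 (m+1) 0 : ℝ) = 0 := by simp [stirling1]
    rw [h0]
    have hrec : ∀ k, (stirling1 (m+1) (k+1) : ℝ)
        = (stirling1 m k : ℝ) + (m:ℝ) * (stirling1 m (k+1) : ℝ) := by
      intro k; show ((stirling1 m k + m * stirling1 m (k+1) : ℕ) : ℝ) = _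
      push_cast; ring
    simp only [hrec]
    have hz : (stirling1 m (m+1) : ℝ) = 0 := by
      rw [stirling1_eq_zero m (m+1) (by omega)]; norm_num
    have split : ∑ k ∈ Finset.range (m+1),
        ((stirling1 m k : ℝ) + (m:ℝ) * (stirling1 m (k+1) : ℝ)) * x^(k+1)
        = x * (∑ k ∈ Finset.range (m+1), (stirling1 m k : ℝ) * x^k)
          + (m:ℝ) * (∑ k ∈ Finset.range (m+1), (stirling1 m (k+1) : ℝ) * x^(k+1)) := by
      rw [Finset.mul_sum, Finset.mul_sum, ← Finset.sum_add_distrib]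
      apply Finset.sum_congr rfl
      intro k _; ring
    rw [split]
    have shift : ∑ k ∈ Finset.range (m+1), (stirling1 m (k+1) : ℝ) * x^(k+1)
        = (∑ k ∈ Finset.range (m+1), (stirling1 m k : ℝ) * x^k) - (stirling1 m 0 : ℝ) := by
      rw [Finset.sum_range_succ (fun k => (stirling1 m (k+1) : ℝ) * x^(k+1)) m,
        Finset.sum_range_succ' (fun k => (stirling1 m k : ℝ) * x^k) m, hz]
      ring
    rw [shift]
    have hm0 : (m:ℝ) * (stirling1 m 0 : ℝ) = 0 := by
      cases m with
      | zero => simp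
      | succ m => simp [stirling1]
    ring_nf
    ring_nf at hm0
    linarith [hm0]

lemma prod_choose (r n : ℕ) :
    ∏ i ∈ Finset.range r, (n+1+i) = (n+r).choose r * r.factorial := by
  induction r with
  | zero => simp
  | succ r ih =>
    rw [Finset.prod_range_succ, ih, Nat.factorial_succ]
    have e : n + (r+1) = (n+r)+1 := by ring
    rw [e]
    calc (n+r).choose r * r.factorial * (n+1+r)
        = ((n+r)+1) * (n+r).choose r * r.factorial := by ring
      _ = ((n+r)+1).choose (r+1) * (r+1) * r.factorial := by rw [Nat.add_one_mul_choose_eq]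
      _ = ((n+r)+1).choose (r+1) * ((r+1) * r.factorial) := by ring

theorem stmt9 (r n : ℕ) (hr : 1 ≤ r) (hn : 1 ≤ n) :
    h (r + 1) n =
      (1 / (r.factorial : ℝ)) *
        ∑ k ∈ Finset.Icc 1 (r + 1),
          (stirling1 (r + 1) k : ℝ) * (n : ℝ) ^ (k - 1) * (H (n + r) - H r) := by
  have hn0 : (n:ℝ) ≠ 0 := by positivity
  have hsum : ∑ k ∈ Finset.Icc 1 (r + 1),
      (stirling1 (r + 1) k : ℝ) * (n : ℝ) ^ (k - 1) * (H (n + r) - H r)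
      = (∑ k ∈ Finset.Icc 1 (r+1), (stirling1 (r+1) k : ℝ) * (n:ℝ)^(k-1)) * (H (n+r) - H r) := by
    rw [Finset.sum_mul]
  have hins : Finset.range (r+2) = insert 0 (Finset.Icc 1 (r+1)) := by
    ext x; simp [Finset.mem_Icc, Finset.mem_range]; omega
  have hmull : (n:ℝ) * (∑ k ∈ Finset.Icc 1 (r+1), (stirling1 (r+1) k : ℝ) * (n:ℝ)^(k-1))
      = ∑ k ∈ Finset.range (r+2), (stirling1 (r+1) k : ℝ) * (n:ℝ)^k := by
    rw [Finset.mul_sum, hins, Finset.sum_insert (by simp)]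
    have h0 : (stirling1 (r+1) 0 : ℝ) = 0 := by simp [stirling1]
    rw [h0, zero_mul, zero_add]
    apply Finset.sum_congr rfl
    intro k hk
    simp only [Finset.mem_Icc] at hk
    obtain ⟨k, rfl⟩ : ∃ j, k = j + 1 := ⟨k-1, by omega⟩
    simp only [Nat.add_sub_cancel, pow_succ]
    ring
  have hP := stirlingP (r+1) (n:ℝ)
  rw [hP] at hmull
  have hprod : (∏ i ∈ Finset.range (r+1), ((n:ℝ) + i))
      = (n:ℝ) * ∏ i ∈ Finset.range r, ((n:ℝ) + 1 + i) := by
    rw [Finset.prod_range_succ' (fun i => ((n:ℝ) + i)) r, Nat.cast_zero, add_zero, mul_comm]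
    congr 1
    refine Finset.prod_congr rfl fun i _ => ?_
    push_cast; ring
  rw [hprod] at hmull
  have hS : (∑ k ∈ Finset.Icc 1 (r+1), (stirling1 (r+1) k : ℝ) * (n:ℝ)^(k-1))
      = ∏ i ∈ Finset.range r, ((n:ℝ) + 1 + i) := by
    exact mul_left_cancel₀ hn0 hmull
  have hpc : (∏ i ∈ Finset.range r, ((n:ℝ) + 1 + i))
      = ((n+r).choose r : ℝ) * (r.factorial : ℝ) := by
    exact_mod_cast prod_choose r n
  rw [hsum, hS, hpc, key r n]
  have hf : (r.factorial : ℝ) ≠ 0 := by positivity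
  field_simp
end

section
/- sum_{n=1}^infty H_n * zeta(4, n) = (5/4)*zeta(4) + 3*zeta(5) - zeta(2)*zeta(3) - zeta(3), where zeta(4, n) is the Hurwitz zeta function. -/
open scoped BigOperators

namespace S13

/-! ### Basic facts -/

lemma summable_pow {p : ℕ} (hp : 2 ≤ p) : Summable (fun n : ℕ => 1/((n:ℝ)+1)^p) := by
  have := (summable_nat_add_iff (f := fun n : ℕ => 1/((n:ℝ))^p) 1).2
    (Real.summable_one_div_nat_pow.2 (by omega))
  exact this.congr (by intro n; push_cast; ring_nf)

lemma H_nonneg (n : ℕ) : 0 ≤ H n := by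
  unfold H; positivity

lemma H_le (n : ℕ) : H n ≤ n := by
  induction n with
  | zero => simp [H]
  | succ m ih =>
    unfold H at *
    rw [Finset.sum_range_succ]
    push_cast
    have : (1:ℝ)/((m:ℝ)+1) ≤ 1 := by
      rw [div_le_one (by positivity)]; linarith [Nat.cast_nonneg (α := ℝ) m]
    linarith

lemma H_succ (n : ℕ) : H (n+1) = H n + 1/((n:ℝ)+1) := by
  unfold H; rw [Finset.sum_range_succ]

lemma sum_H (m : ℕ) : ∑ n ∈ Finset.range (m+1), H (n+1)
    = ((m:ℝ)+2) * H (m+1) - ((m:ℝ)+1) := by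
  induction m with
  | zero => norm_num [H]
  | succ m ih =>
    rw [Finset.sum_range_succ, ih, H_succ (m+1)]
    push_cast
    have h1 : ((m:ℝ)+2) * (1/((m:ℝ)+2)) = 1 := by
      rw [mul_one_div, div_self]; positivity
    linear_combination -h1

set_option maxHeartbeats 1000000 in
lemma summable_prod_le {f : ℕ×ℕ → ℝ} (h0 : ∀ p, 0 ≤ f p)
    (hb : ∀ p : ℕ×ℕ, f p ≤ 1/(((p.1:ℝ)+1)^2 * ((p.2:ℝ)+1)^2)) : Summable f := by
  have hnn : (0:ℕ→ℝ) ≤ (fun n : ℕ => 1/((n:ℝ)+1)^2) := Pi.le_def.2 (fun n => by positivity)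
  have hs : Summable (fun p : ℕ×ℕ => (1/((p.1:ℝ)+1)^2) * (1/((p.2:ℝ)+1)^2)) :=
    Summable.mul_of_nonneg (summable_pow le_rfl) (summable_pow le_rfl) hnn hnn
  refine Summable.of_nonneg_of_le h0 (fun p => ?_) hs
  calc f p ≤ 1/(((p.1:ℝ)+1)^2 * ((p.2:ℝ)+1)^2) := hb p
    _ = (1/((p.1:ℝ)+1)^2) * (1/((p.2:ℝ)+1)^2) := by rw [one_div_mul_one_div]

/-! ### Telescoping sum -/

lemma partial_tele (a N : ℕ) :
    ∑ b ∈ Finset.range N, 1/(((b:ℝ)+1)*((a:ℝ)+(b:ℝ)+2))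
      = (H N + H (a+1) - H (N+a+1)) / ((a:ℝ)+1) := by
  induction N with
  | zero => simp [H]
  | succ N ih =>
    rw [Finset.sum_range_succ, ih]
    have h1 : H (N+1) = H N + 1/((N:ℝ)+1) := by unfold H; rw [Finset.sum_range_succ]
    have h2 : H (N+1+a+1) = H (N+a+1) + 1/((N:ℝ)+(a:ℝ)+2) := by
      have : N+1+a+1 = (N+a+1)+1 := by omega
      rw [this]; unfold H; rw [Finset.sum_range_succ]; push_cast; ring_nf
    rw [h1, h2]
    have hb : ((N:ℝ)+1) ≠ 0 := by positivity
    have hx : ((a:ℝ)+(N:ℝ)+2) ≠ 0 := by positivity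
    have hy : ((N:ℝ)+(a:ℝ)+2) ≠ 0 := by positivity
    have ha : ((a:ℝ)+1) ≠ 0 := by positivity
    field_simp
    ring

lemma tende (a : ℕ) : Filter.Tendsto (fun N : ℕ => H (N+a+1) - H N) Filter.atTop (nhds 0) := by
  have hb : ∀ N : ℕ, H (N+a+1) - H N = ∑ i ∈ Finset.range (a+1), 1/((N:ℝ)+(i:ℝ)+1) := by
    intro N
    have : N + a + 1 = N + (a+1) := by omega
    unfold H
    rw [this, Finset.sum_range_add, add_sub_cancel_left]
    apply Finset.sum_congr rfl
    intro i _
    push_cast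
    ring
  have hle : ∀ N : ℕ, |H (N+a+1) - H N| ≤ ((a:ℝ)+1) * (1/((N:ℝ)+1)) := by
    intro N
    rw [hb N, abs_of_nonneg (by positivity)]
    calc ∑ i ∈ Finset.range (a+1), 1/((N:ℝ)+(i:ℝ)+1)
        ≤ ∑ i ∈ Finset.range (a+1), 1/((N:ℝ)+1) := by
          apply Finset.sum_le_sum
          intro i _
          apply one_div_le_one_div_of_le (by positivity)
          have : (0:ℝ) ≤ i := Nat.cast_nonneg i
          linarith
      _ = ((a:ℝ)+1) * (1/((N:ℝ)+1)) := by
          rw [Finset.sum_const, Finset.card_range]; push_cast; ring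
  have h0 : Filter.Tendsto (fun N : ℕ => ((a:ℝ)+1) * (1/((N:ℝ)+1))) Filter.atTop (nhds 0) := by
    have := tendsto_one_div_add_atTop_nhds_zero_nat (𝕜 := ℝ)
    simpa using this.const_mul ((a:ℝ)+1)
  exact squeeze_zero_norm hle h0

lemma hasSum_tele (a : ℕ) :
    HasSum (fun b : ℕ => 1/(((b:ℝ)+1)*((a:ℝ)+(b:ℝ)+2))) (H (a+1) / ((a:ℝ)+1)) := by
  have hsum : Summable (fun b : ℕ => 1/(((b:ℝ)+1)*((a:ℝ)+(b:ℝ)+2))) := by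
    apply Summable.of_nonneg_of_le (fun b => by positivity) _ (summable_pow (p := 2) le_rfl)
    intro b
    rw [pow_two]
    apply one_div_le_one_div_of_le (by positivity)
    have := Nat.cast_nonneg (α := ℝ) a
    nlinarith [Nat.cast_nonneg (α := ℝ) b]
  rw [Summable.hasSum_iff_tendsto_nat hsum]
  have := ((Filter.Tendsto.const_sub (H (a+1)) (tende a)).div_const ((a:ℝ)+1))
  simp only [sub_zero] at this
  apply this.congr'
  filter_upwards [] with N
  rw [partial_tele a N]
  ring

/-! ### Double sums -/

noncomputable def D (a b : ℕ) : ℝ :=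
  ∑' p : ℕ×ℕ, 1/((((p.1:ℝ))+((p.2:ℝ))+2)^a * ((p.1:ℝ)+1)^b)

noncomputable def E (s : ℕ) : ℝ :=
  ∑' p : ℕ×ℕ, 1/(((p.2:ℝ)+1) * (((p.1:ℝ))+((p.2:ℝ))+2)^s)

lemma one_le_cast_add (n : ℕ) : (1:ℝ) ≤ (n:ℝ)+1 := by
  linarith [Nat.cast_nonneg (α := ℝ) n]

lemma summable_D {a b : ℕ} (ha : 2 ≤ a) (hb : 2 ≤ b) :
    Summable (fun p : ℕ×ℕ => 1/((((p.1:ℝ))+((p.2:ℝ))+2)^a * ((p.1:ℝ)+1)^b)) := by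
  apply summable_prod_le (fun p => by positivity)
  intro p
  apply one_div_le_one_div_of_le (by positivity)
  have h1 : ((p.1:ℝ)+1)^2 ≤ ((p.1:ℝ)+1)^b :=
    pow_le_pow_right₀ (one_le_cast_add p.1) hb
  have h2 : ((p.2:ℝ)+1)^2 ≤ ((p.1:ℝ)+(p.2:ℝ)+2)^a := by
    calc ((p.2:ℝ)+1)^2 ≤ ((p.1:ℝ)+(p.2:ℝ)+2)^2 := by
          apply pow_le_pow_left₀ (by positivity)
          linarith [Nat.cast_nonneg (α := ℝ) p.1]
      _ ≤ ((p.1:ℝ)+(p.2:ℝ)+2)^a := by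
          apply pow_le_pow_right₀ _ ha
          linarith [Nat.cast_nonneg (α := ℝ) p.1, Nat.cast_nonneg (α := ℝ) p.2]
  calc ((p.1:ℝ)+1)^2 * ((p.2:ℝ)+1)^2
      ≤ ((p.1:ℝ)+1)^b * ((p.1:ℝ)+(p.2:ℝ)+2)^a := by
        apply mul_le_mul h1 h2 (by positivity) (by positivity)
    _ = ((p.1:ℝ)+(p.2:ℝ)+2)^a * ((p.1:ℝ)+1)^b := by ring

lemma summable_E {s : ℕ} (hs : 3 ≤ s) :
    Summable (fun p : ℕ×ℕ => 1/(((p.2:ℝ)+1) * (((p.1:ℝ))+((p.2:ℝ))+2)^s)) := by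
  apply summable_prod_le (fun p => by positivity)
  intro p
  apply one_div_le_one_div_of_le (by positivity)
  have hX1 : ((p.1:ℝ)+1) ≤ ((p.1:ℝ)+(p.2:ℝ)+2) := by
    linarith [Nat.cast_nonneg (α := ℝ) p.2]
  have hX2 : ((p.2:ℝ)+1) ≤ ((p.1:ℝ)+(p.2:ℝ)+2) := by
    linarith [Nat.cast_nonneg (α := ℝ) p.1]
  have h3 : ((p.1:ℝ)+1)^2 * ((p.2:ℝ)+1) ≤ ((p.1:ℝ)+(p.2:ℝ)+2)^3 := by
    have : ((p.1:ℝ)+(p.2:ℝ)+2)^3 = ((p.1:ℝ)+(p.2:ℝ)+2)^2 * ((p.1:ℝ)+(p.2:ℝ)+2) := by ring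
    rw [this]
    apply mul_le_mul _ hX2 (by positivity) (by positivity)
    apply pow_le_pow_left₀ (by positivity) hX1
  have h4 : ((p.1:ℝ)+(p.2:ℝ)+2)^3 ≤ ((p.1:ℝ)+(p.2:ℝ)+2)^s := by
    apply pow_le_pow_right₀ _ hs
    linarith [Nat.cast_nonneg (α := ℝ) p.1, Nat.cast_nonneg (α := ℝ) p.2]
  calc ((p.1:ℝ)+1)^2 * ((p.2:ℝ)+1)^2
      = (((p.1:ℝ)+1)^2 * ((p.2:ℝ)+1)) * ((p.2:ℝ)+1) := by ring
    _ ≤ ((p.1:ℝ)+(p.2:ℝ)+2)^s * ((p.2:ℝ)+1) := by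
        apply mul_le_mul (h3.trans h4) le_rfl (by positivity) (by positivity)
    _ = ((p.2:ℝ)+1) * ((p.1:ℝ)+(p.2:ℝ)+2)^s := by ring

/-! ### Trichotomy splitting -/

lemma split3 {F : ℕ×ℕ → ℝ} (h0 : ∀ p, 0 ≤ F p) (hF : Summable F) :
    ∑' p, F p = (∑' q : ℕ×ℕ, F (q.1, q.1+q.2+1)) + (∑' q : ℕ×ℕ, F (q.1+q.2+1, q.1))
      + ∑' n : ℕ, F (n,n) := by
  classical
  set G1 : ℕ×ℕ → ℝ := fun p => if p.1 < p.2 then F p else 0 with hG1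
  set G2 : ℕ×ℕ → ℝ := fun p => if p.2 < p.1 then F p else 0 with hG2
  set G3 : ℕ×ℕ → ℝ := fun p => if p.1 = p.2 then F p else 0 with hG3
  have hdec : ∀ p, F p = G1 p + G2 p + G3 p := by
    intro p
    simp only [hG1, hG2, hG3]
    rcases lt_trichotomy p.1 p.2 with h|h|h
    · rw [if_pos h, if_neg (by omega), if_neg (by omega)]; ring
    · rw [if_neg (by omega), if_neg (by omega), if_pos h]; ring
    · rw [if_neg (by omega), if_pos h, if_neg (by omega)]; ring
  have hs1 : Summable G1 := by
    apply Summable.of_nonneg_of_le _ _ hF <;> intro p <;> simp only [hG1] <;> split <;>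
      simp [h0 p]
  have hs2 : Summable G2 := by
    apply Summable.of_nonneg_of_le _ _ hF <;> intro p <;> simp only [hG2] <;> split <;>
      simp [h0 p]
  have hs3 : Summable G3 := by
    apply Summable.of_nonneg_of_le _ _ hF <;> intro p <;> simp only [hG3] <;> split <;>
      simp [h0 p]
  have e1 : ∑' q : ℕ×ℕ, F (q.1, q.1+q.2+1) = ∑' p, G1 p := by
    have hinj : Function.Injective (fun q : ℕ×ℕ => ((q.1, q.1+q.2+1) : ℕ×ℕ)) := by
      intro x y hxy
      simp only [Prod.mk.injEq] at hxy
      exact Prod.ext hxy.1 (by omega)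
    have hsupp : Function.support G1 ⊆ Set.range (fun q : ℕ×ℕ => ((q.1, q.1+q.2+1) : ℕ×ℕ)) := by
      intro p hp
      have hlt : p.1 < p.2 := by
        by_contra hc; simp [hG1, hc] at hp
      exact ⟨(p.1, p.2 - p.1 - 1), Prod.ext rfl (by simp; omega)⟩
    rw [← Function.Injective.tsum_eq hinj hsupp]
    apply tsum_congr
    intro q
    simp only [hG1]
    rw [if_pos (by omega)]
  have e2 : ∑' q : ℕ×ℕ, F (q.1+q.2+1, q.1) = ∑' p, G2 p := by
    have hinj : Function.Injective (fun q : ℕ×ℕ => ((q.1+q.2+1, q.1) : ℕ×ℕ)) := by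
      intro x y hxy
      simp only [Prod.mk.injEq] at hxy
      exact Prod.ext hxy.2 (by omega)
    have hsupp : Function.support G2 ⊆ Set.range (fun q : ℕ×ℕ => ((q.1+q.2+1, q.1) : ℕ×ℕ)) := by
      intro p hp
      have hlt : p.2 < p.1 := by
        by_contra hc; simp [hG2, hc] at hp
      exact ⟨(p.2, p.1 - p.2 - 1), Prod.ext (by simp; omega) rfl⟩
    rw [← Function.Injective.tsum_eq hinj hsupp]
    apply tsum_congr
    intro q
    simp only [hG2]
    rw [if_pos (by omega)]
  have e3 : ∑' n : ℕ, F (n,n) = ∑' p, G3 p := by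
    have hinj : Function.Injective (fun n : ℕ => ((n, n) : ℕ×ℕ)) := by
      intro x y hxy
      have : (x,x) = ((y,y) : ℕ×ℕ) := hxy
      exact congrArg Prod.fst this
    have hsupp : Function.support G3 ⊆ Set.range (fun n : ℕ => ((n, n) : ℕ×ℕ)) := by
      intro p hp
      have heq : p.1 = p.2 := by
        by_contra hc; simp [hG3, hc] at hp
      exact ⟨p.1, Prod.ext rfl heq⟩
    rw [← Function.Injective.tsum_eq hinj hsupp]
    apply tsum_congr
    intro n
    simp [hG3]
  rw [e1, e2, e3, ← Summable.tsum_add hs1 hs2, ← Summable.tsum_add (hs1.add hs2) hs3]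
  exact tsum_congr hdec

/-! ### Stuffle -/

/- stuffle -/
set_option maxHeartbeats 1000000 in
lemma stuffle {a b : ℕ} (ha : 2 ≤ a) (hb : 2 ≤ b) :
    zeta a * zeta b = D b a + D a b + zeta (a+b) := by
  set F : ℕ×ℕ → ℝ := fun p => (1/((p.1:ℝ)+1)^a) * (1/((p.2:ℝ)+1)^b) with hFdef
  have h0 : ∀ p, 0 ≤ F p := fun p => by positivity
  have hnn1 : (0:ℕ→ℝ) ≤ (fun n : ℕ => 1/((n:ℝ)+1)^a) := Pi.le_def.2 (fun n => by positivity)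
  have hnn2 : (0:ℕ→ℝ) ≤ (fun n : ℕ => 1/((n:ℝ)+1)^b) := Pi.le_def.2 (fun n => by positivity)
  have hF : Summable F :=
    Summable.mul_of_nonneg (summable_pow ha) (summable_pow hb) hnn1 hnn2
  have hslice : ∀ j : ℕ, Summable (fun k : ℕ => F (j,k)) := by
    intro j
    simp only [hFdef]
    exact (summable_pow hb).mul_left _
  have hprod : zeta a * zeta b = ∑' p, F p := by
    rw [Summable.tsum_prod' hF hslice]
    unfold zeta
    rw [← tsum_mul_right]
    apply tsum_congr
    intro j
    rw [← tsum_mul_left]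
  rw [hprod, split3 h0 hF]
  congr 1
  · congr 1
    · unfold D
      apply tsum_congr
      intro q
      simp only [hFdef]
      push_cast
      ring
    · unfold D
      apply tsum_congr
      intro q
      simp only [hFdef]
      push_cast
      ring
  · unfold zeta
    apply tsum_congr
    intro n
    simp only [hFdef]
    rw [one_div_mul_one_div, ← pow_add]

/-! ### E in terms of zetaH -/

lemma summable_zetaH {s : ℕ} (hs : 3 ≤ s) :
    Summable (fun n : ℕ => H (n+1) / ((n:ℝ)+1)^s) := by
  apply Summable.of_nonneg_of_le
    (fun n => div_nonneg (H_nonneg _) (by positivity)) _ (summable_pow (p := 2) le_rfl)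
  intro n
  rw [div_le_div_iff₀ (by positivity) (by positivity)]
  have h1 : H (n+1) ≤ (n:ℝ)+1 := by have := H_le (n+1); push_cast at this; linarith
  calc H (n+1) * ((n:ℝ)+1)^2 ≤ ((n:ℝ)+1) * ((n:ℝ)+1)^2 := by
        apply mul_le_mul_of_nonneg_right h1 (by positivity)
    _ = ((n:ℝ)+1)^3 := by ring
    _ ≤ ((n:ℝ)+1)^s := pow_le_pow_right₀ (one_le_cast_add n) hs
    _ = 1 * ((n:ℝ)+1)^s := (one_mul _).symm
lemma summable_HE {s : ℕ} (hs : 3 ≤ s) :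
    Summable (fun n : ℕ => H n / ((n:ℝ)+1)^s) := by
  apply Summable.of_nonneg_of_le
    (fun n => div_nonneg (H_nonneg _) (by positivity)) _ (summable_pow (p := 2) le_rfl)
  intro n
  rw [div_le_div_iff₀ (by positivity) (by positivity)]
  have h1 : H n ≤ (n:ℝ)+1 := by have := H_le n; linarith
  calc H n * ((n:ℝ)+1)^2 ≤ ((n:ℝ)+1) * ((n:ℝ)+1)^2 := by
        apply mul_le_mul_of_nonneg_right h1 (by positivity)
    _ = ((n:ℝ)+1)^3 := by ring
    _ ≤ ((n:ℝ)+1)^s := pow_le_pow_right₀ (one_le_cast_add n) hs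
    _ = 1 * ((n:ℝ)+1)^s := (one_mul _).symm

lemma E_eq {s : ℕ} (hs : 3 ≤ s) : E s = ∑' n : ℕ, H n / ((n:ℝ)+1)^s := by
  classical
  set M : ℕ×ℕ → ℝ := fun p => if p.2 < p.1 then 1/(((p.2:ℝ)+1)*((p.1:ℝ)+1)^s) else 0
    with hM
  have hinj : Function.Injective (fun q : ℕ×ℕ => ((q.1+q.2+1, q.2) : ℕ×ℕ)) := by
    intro x y hxy
    simp only [Prod.mk.injEq] at hxy
    exact Prod.ext (by omega) hxy.2
  have hsupp : Function.support M ⊆ Set.range (fun q : ℕ×ℕ => ((q.1+q.2+1, q.2) : ℕ×ℕ)) := by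
    intro p hp
    have hlt : p.2 < p.1 := by
      by_contra hc; simp [hM, hc] at hp
    exact ⟨(p.1 - p.2 - 1, p.2), Prod.ext (by simp; omega) rfl⟩
  have e1 : E s = ∑' p, M p := by
    unfold E
    rw [← Function.Injective.tsum_eq hinj hsupp]
    apply tsum_congr
    intro q
    simp only [hM]
    rw [if_pos (by omega : (q.1+q.2+1, q.2).2 < (q.1+q.2+1, q.2).1)]
    push_cast
    ring_nf
  have hsumM : Summable M := by
    apply summable_prod_le
    · intro p
      simp only [hM]
      split
      · positivity
      · exact le_rfl
    · intro p
      simp only [hM]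
      split
      · rename_i hlt
        apply one_div_le_one_div_of_le (by positivity)
        have h2 : ((p.2:ℝ)+1) ≤ ((p.1:ℝ)+1) := by
          have : (p.2:ℝ) ≤ (p.1:ℝ) := by exact_mod_cast Nat.le_of_lt hlt
          linarith
        calc ((p.1:ℝ)+1)^2 * ((p.2:ℝ)+1)^2
            = (((p.2:ℝ)+1) * ((p.2:ℝ)+1)) * ((p.1:ℝ)+1)^2 := by ring
          _ ≤ (((p.2:ℝ)+1) * ((p.1:ℝ)+1)) * ((p.1:ℝ)+1)^2 := by
              apply mul_le_mul_of_nonneg_right _ (by positivity)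
              apply mul_le_mul_of_nonneg_left h2 (by positivity)
          _ = ((p.2:ℝ)+1) * (((p.1:ℝ)+1)^2 * ((p.1:ℝ)+1)) := by ring
          _ ≤ ((p.2:ℝ)+1) * ((p.1:ℝ)+1)^s := by
              apply mul_le_mul_of_nonneg_left _ (by positivity)
              calc ((p.1:ℝ)+1)^2 * ((p.1:ℝ)+1) = ((p.1:ℝ)+1)^3 := by ring
                _ ≤ ((p.1:ℝ)+1)^s := pow_le_pow_right₀ (one_le_cast_add p.1) hs
      · positivity
  have hslice : ∀ n : ℕ, Summable (fun k : ℕ => M (n,k)) := by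
    intro n
    apply summable_of_ne_finset_zero (s := Finset.range n)
    intro k hk
    simp only [hM]
    rw [if_neg]
    simp at hk
    omega
  rw [e1, Summable.tsum_prod' hsumM hslice]
  apply tsum_congr
  intro n
  have : ∑' k, M (n,k) = ∑ k ∈ Finset.range n, M (n,k) := by
    apply tsum_eq_sum
    intro k hk
    simp only [hM]
    rw [if_neg]
    simp at hk
    omega
  rw [this]
  have : ∀ k ∈ Finset.range n, M (n,k) = (1/((k:ℝ)+1)) * (1/((n:ℝ)+1)^s) := by
    intro k hk
    simp only [hM]
    rw [if_pos (by simpa using hk)]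
    rw [one_div_mul_one_div]
  rw [Finset.sum_congr rfl this, ← Finset.sum_mul, mul_one_div]
  unfold H
  rfl

lemma zetaH_eq {s : ℕ} (hs : 3 ≤ s) : zetaH s = E s + zeta (s+1) := by
  unfold zetaH zeta
  rw [E_eq hs, ← Summable.tsum_add (summable_HE hs) (summable_pow (by omega))]
  apply tsum_congr
  intro n
  rw [H_succ]
  have hx : ((n:ℝ)+1) ≠ 0 := by positivity
  field_simp
  ring

/-! ### Partial fraction identities summed -/

lemma cast2 (p : ℕ×ℕ) : (0:ℝ) < (p.1:ℝ)+(p.2:ℝ)+2 := by positivity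

lemma summable_R {s : ℕ} (hs : 2 ≤ s) :
    Summable (fun p : ℕ×ℕ => 1/(((p.1:ℝ)+1)^s * ((p.2:ℝ)+1) * ((p.1:ℝ)+(p.2:ℝ)+2))) := by
  apply summable_prod_le (fun p => by positivity)
  intro p
  apply one_div_le_one_div_of_le (by positivity)
  have hX2 : ((p.2:ℝ)+1) ≤ ((p.1:ℝ)+(p.2:ℝ)+2) := by
    linarith [Nat.cast_nonneg (α := ℝ) p.1]
  have h1 : ((p.1:ℝ)+1)^2 ≤ ((p.1:ℝ)+1)^s := pow_le_pow_right₀ (one_le_cast_add p.1) hs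
  calc ((p.1:ℝ)+1)^2 * ((p.2:ℝ)+1)^2
      = ((p.1:ℝ)+1)^2 * (((p.2:ℝ)+1) * ((p.2:ℝ)+1)) := by ring
    _ ≤ ((p.1:ℝ)+1)^s * (((p.2:ℝ)+1) * ((p.1:ℝ)+(p.2:ℝ)+2)) := by
        apply mul_le_mul h1 _ (by positivity) (by positivity)
        apply mul_le_mul_of_nonneg_left hX2 (by positivity)
    _ = ((p.1:ℝ)+1)^s * ((p.2:ℝ)+1) * ((p.1:ℝ)+(p.2:ℝ)+2) := by ring

lemma R_eq {s : ℕ} (hs : 2 ≤ s) :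
    ∑' p : ℕ×ℕ, 1/(((p.1:ℝ)+1)^s * ((p.2:ℝ)+1) * ((p.1:ℝ)+(p.2:ℝ)+2)) = zetaH (s+1) := by
  have hslice : ∀ a : ℕ,
      Summable (fun k : ℕ => 1/(((a:ℝ)+1)^s * ((k:ℝ)+1) * ((a:ℝ)+(k:ℝ)+2))) := by
    intro a
    have := ((hasSum_tele a).summable.mul_left (1/((a:ℝ)+1)^s))
    apply this.congr
    intro k
    rw [one_div_mul_one_div]
    congr 1
    ring
  rw [Summable.tsum_prod' (summable_R hs) hslice]
  unfold zetaH
  apply tsum_congr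
  intro a
  have h1 : ∀ k : ℕ, 1/(((a:ℝ)+1)^s * ((k:ℝ)+1) * ((a:ℝ)+(k:ℝ)+2))
      = (1/((a:ℝ)+1)^s) * (1/(((k:ℝ)+1)*((a:ℝ)+(k:ℝ)+2))) := by
    intro k
    rw [one_div_mul_one_div]
    congr 1
    ring
  rw [tsum_congr h1, tsum_mul_left, (hasSum_tele a).tsum_eq]
  rw [one_div, inv_mul_eq_div, div_div]
  rw [pow_succ]
  ring

lemma PF4 : E 4 + E 4 + D 3 2 + D 2 3 = zetaH 4 := by
  have hs1 : Summable (fun p : ℕ×ℕ => 1/(((p.2:ℝ)+1) * (((p.1:ℝ))+((p.2:ℝ))+2)^4)) :=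
    summable_E (by norm_num)
  have hs2 : Summable (fun p : ℕ×ℕ => 1/(((p.1:ℝ)+1) * (((p.1:ℝ))+((p.2:ℝ))+2)^4)) := by
    apply hs1.prod_symm.congr
    intro p
    simp only [Prod.fst_swap, Prod.snd_swap]
    congr 2
    ring
  have hs3 : Summable (fun p : ℕ×ℕ => 1/((((p.1:ℝ))+((p.2:ℝ))+2)^3 * ((p.1:ℝ)+1)^2)) :=
    summable_D (by norm_num) (by norm_num)
  have hs4 : Summable (fun p : ℕ×ℕ => 1/((((p.1:ℝ))+((p.2:ℝ))+2)^2 * ((p.1:ℝ)+1)^3)) :=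
    summable_D (by norm_num) (by norm_num)
  have hpt : ∀ p : ℕ×ℕ, 1/(((p.1:ℝ)+1)^3 * ((p.2:ℝ)+1) * ((p.1:ℝ)+(p.2:ℝ)+2))
      = 1/(((p.2:ℝ)+1) * (((p.1:ℝ))+((p.2:ℝ))+2)^4)
        + 1/(((p.1:ℝ)+1) * (((p.1:ℝ))+((p.2:ℝ))+2)^4)
        + 1/((((p.1:ℝ))+((p.2:ℝ))+2)^3 * ((p.1:ℝ)+1)^2)
        + 1/((((p.1:ℝ))+((p.2:ℝ))+2)^2 * ((p.1:ℝ)+1)^3) := by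
    intro p
    have hx : ((p.1:ℝ)+1) ≠ 0 := by positivity
    have hy : ((p.2:ℝ)+1) ≠ 0 := by positivity
    have hX : ((p.1:ℝ)+(p.2:ℝ)+2) ≠ 0 := by positivity
    field_simp
    ring
  have e2 : ∑' p : ℕ×ℕ, 1/(((p.1:ℝ)+1) * (((p.1:ℝ))+((p.2:ℝ))+2)^4) = E 4 := by
    unfold E
    rw [← (Equiv.prodComm ℕ ℕ).tsum_eq (fun p : ℕ×ℕ =>
      1/(((p.2:ℝ)+1) * (((p.1:ℝ))+((p.2:ℝ))+2)^4))]
    apply tsum_congr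
    intro q
    simp only [Equiv.prodComm_apply, Prod.fst_swap, Prod.snd_swap]
    congr 2
    ring
  rw [← R_eq (by norm_num : 2 ≤ 3), tsum_congr hpt,
    Summable.tsum_add ((hs1.add hs2).add hs3) hs4, Summable.tsum_add (hs1.add hs2) hs3, Summable.tsum_add hs1 hs2, e2]
  rfl

lemma PF3 : E 3 + E 3 + D 2 2 = zetaH 3 := by
  have hs1 : Summable (fun p : ℕ×ℕ => 1/(((p.2:ℝ)+1) * (((p.1:ℝ))+((p.2:ℝ))+2)^3)) :=
    summable_E (by norm_num)
  have hs2 : Summable (fun p : ℕ×ℕ => 1/(((p.1:ℝ)+1) * (((p.1:ℝ))+((p.2:ℝ))+2)^3)) := by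
    apply hs1.prod_symm.congr
    intro p
    simp only [Prod.fst_swap, Prod.snd_swap]
    congr 2
    ring
  have hs3 : Summable (fun p : ℕ×ℕ => 1/((((p.1:ℝ))+((p.2:ℝ))+2)^2 * ((p.1:ℝ)+1)^2)) :=
    summable_D (by norm_num) (by norm_num)
  have hpt : ∀ p : ℕ×ℕ, 1/(((p.1:ℝ)+1)^2 * ((p.2:ℝ)+1) * ((p.1:ℝ)+(p.2:ℝ)+2))
      = 1/(((p.2:ℝ)+1) * (((p.1:ℝ))+((p.2:ℝ))+2)^3)
        + 1/(((p.1:ℝ)+1) * (((p.1:ℝ))+((p.2:ℝ))+2)^3)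
        + 1/((((p.1:ℝ))+((p.2:ℝ))+2)^2 * ((p.1:ℝ)+1)^2) := by
    intro p
    have hx : ((p.1:ℝ)+1) ≠ 0 := by positivity
    have hy : ((p.2:ℝ)+1) ≠ 0 := by positivity
    have hX : ((p.1:ℝ)+(p.2:ℝ)+2) ≠ 0 := by positivity
    field_simp
    ring
  have e2 : ∑' p : ℕ×ℕ, 1/(((p.1:ℝ)+1) * (((p.1:ℝ))+((p.2:ℝ))+2)^3) = E 3 := by
    unfold E
    rw [← (Equiv.prodComm ℕ ℕ).tsum_eq (fun p : ℕ×ℕ =>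
      1/(((p.2:ℝ)+1) * (((p.1:ℝ))+((p.2:ℝ))+2)^3))]
    apply tsum_congr
    intro q
    simp only [Equiv.prodComm_apply, Prod.fst_swap, Prod.snd_swap]
    congr 2
    ring
  rw [← R_eq (le_rfl : 2 ≤ 2), tsum_congr hpt,
    Summable.tsum_add (hs1.add hs2) hs3, Summable.tsum_add hs1 hs2, e2]
  rfl

/-! ### zeta values -/

lemma zeta_aux {p : ℕ} (hp : 2 ≤ p) {v : ℝ}
    (hv : HasSum (fun n : ℕ => (1:ℝ)/(n:ℝ)^p) v) : zeta p = v := by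
  have h1 := hv.tsum_eq
  rw [Summable.tsum_eq_zero_add hv.summable] at h1
  simp only [Nat.cast_zero] at h1
  rw [zero_pow (by omega), div_zero, zero_add] at h1
  unfold zeta
  rw [← h1]
  apply tsum_congr
  intro n
  push_cast
  rfl

lemma zeta_two : zeta 2 = Real.pi^2/6 := zeta_aux (by norm_num) hasSum_zeta_two
lemma zeta_four : zeta 4 = Real.pi^4/90 := zeta_aux (by norm_num) hasSum_zeta_four

lemma zetaH4_eq : zetaH 4 = 3 * zeta 5 - zeta 2 * zeta 3 := by
  have h1 := PF4
  have h2 := zetaH_eq (s := 4) (by norm_num)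
  have h3 := stuffle (a := 2) (b := 3) (by norm_num) (by norm_num)
  norm_num at h2 h3
  linarith

lemma zetaH3_eq : zetaH 3 = (5/4) * zeta 4 := by
  have h1 := PF3
  have h2 := zetaH_eq (s := 3) (by norm_num)
  have h3 := stuffle (a := 2) (b := 2) (by norm_num) (by norm_num)
  have h4 : zeta 2 * zeta 2 = (5/2) * zeta 4 := by
    rw [zeta_two, zeta_four]; ring
  norm_num at h2 h3
  linarith

lemma key : ∑' n : ℕ, H (n + 1) * hzeta 4 (n + 1) = zetaH 3 + zetaH 4 - zeta 3 := by
  classical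
  set K : ℕ×ℕ → ℝ := fun p => if p.2 ≤ p.1 then H (p.2+1)/((p.1:ℝ)+1)^4 else 0 with hKdef
  have hK0 : ∀ p, 0 ≤ K p := by
    intro p
    simp only [hKdef]
    split
    · exact div_nonneg (H_nonneg _) (by positivity)
    · exact le_rfl
  have hKslice : ∀ m : ℕ, Summable (fun n : ℕ => K (m,n)) := by
    intro m
    apply summable_of_ne_finset_zero (s := Finset.range (m+1))
    intro n hn
    simp only [hKdef]
    rw [if_neg]
    simp at hn
    omega
  have hKsum : ∀ m : ℕ, ∑' n : ℕ, K (m,n)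
      = (((m:ℝ)+2) * H (m+1) - ((m:ℝ)+1))/((m:ℝ)+1)^4 := by
    intro m
    rw [tsum_eq_sum (s := Finset.range (m+1)) (by
      intro n hn
      simp only [hKdef]
      rw [if_neg]
      simp at hn
      omega)]
    have : ∀ n ∈ Finset.range (m+1), K (m,n) = H (n+1)/((m:ℝ)+1)^4 := by
      intro n hn
      simp only [hKdef]
      rw [if_pos (by simp at hn; omega)]
    rw [Finset.sum_congr rfl this, ← Finset.sum_div, sum_H]
  have hK : Summable K := by
    rw [summable_prod_of_nonneg hK0]
    refine ⟨hKslice, ?_⟩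
    apply Summable.of_nonneg_of_le
      (fun m => tsum_nonneg (fun n => hK0 (m,n))) _ ((summable_pow (p := 2) le_rfl).mul_left 2)
    intro m
    rw [hKsum m]
    have h1 : H (m+1) ≤ (m:ℝ)+1 := by have := H_le (m+1); push_cast at this; linarith
    have h2 : 0 ≤ H (m+1) := H_nonneg _
    rw [mul_one_div, div_le_div_iff₀ (by positivity) (by positivity)]
    have hc : (0:ℝ) ≤ (m:ℝ) := Nat.cast_nonneg m
    have h3 : H (m+1) * (((m:ℝ)+2)*((m:ℝ)+1)^2) ≤ ((m:ℝ)+1) * (((m:ℝ)+2)*((m:ℝ)+1)^2) :=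
      mul_le_mul_of_nonneg_right h1 (by positivity)
    nlinarith [pow_pos (by positivity : (0:ℝ) < (m:ℝ)+1) 3]
  -- reindex
  have hinj : Function.Injective (fun q : ℕ×ℕ => ((q.1+q.2, q.1) : ℕ×ℕ)) := by
    intro x y hxy
    simp only [Prod.mk.injEq] at hxy
    exact Prod.ext hxy.2 (by omega)
  have hsupp : Function.support K ⊆ Set.range (fun q : ℕ×ℕ => ((q.1+q.2, q.1) : ℕ×ℕ)) := by
    intro p hp
    have hle : p.2 ≤ p.1 := by
      by_contra hc; simp [hKdef, hc] at hp
    exact ⟨(p.2, p.1 - p.2), Prod.ext (by simp; omega) rfl⟩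
  have hWK : ∀ q : ℕ×ℕ, H (q.1+1) * ((1:ℝ) / (((q.2:ℝ)) + ((q.1+1 : ℕ):ℝ))^4) = K (q.1+q.2, q.1) := by
    intro q
    simp only [hKdef]
    rw [if_pos (by omega : (q.1+q.2, q.1).2 ≤ (q.1+q.2, q.1).1)]
    rw [mul_one_div]
    congr 1
    push_cast
    ring
  have hW : Summable (fun q : ℕ×ℕ => H (q.1+1) * ((1:ℝ) / (((q.2:ℝ)) + ((q.1+1 : ℕ):ℝ))^4)) := by
    apply Summable.congr (hK.comp_injective hinj)
    intro q
    exact (hWK q).symm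
  have hWslice : ∀ n : ℕ, Summable (fun j : ℕ => H (n+1) * ((1:ℝ) / (((j:ℝ)) + ((n+1 : ℕ):ℝ))^4)) := by
    intro n
    apply Summable.mul_left
    have base : Summable (fun t : ℕ => 1/((t:ℝ)+1)^4) := summable_pow (by norm_num)
    have := (summable_nat_add_iff (f := fun t : ℕ => 1/((t:ℝ)+1)^4) n).2 base
    apply this.congr
    intro j
    push_cast
    ring_nf
  calc ∑' n : ℕ, H (n + 1) * hzeta 4 (n + 1)
      = ∑' n : ℕ, ∑' j : ℕ, H (n+1) * ((1:ℝ) / (((j:ℝ)) + ((n+1 : ℕ):ℝ))^4) := by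
        apply tsum_congr
        intro n
        unfold hzeta
        rw [← tsum_mul_left]
    _ = ∑' q : ℕ×ℕ, H (q.1+1) * ((1:ℝ) / (((q.2:ℝ)) + ((q.1+1 : ℕ):ℝ))^4) := by
        rw [Summable.tsum_prod' hW hWslice]
    _ = ∑' p : ℕ×ℕ, K p := by
        rw [← Function.Injective.tsum_eq hinj hsupp]
        exact tsum_congr hWK
    _ = ∑' m : ℕ, (((m:ℝ)+2) * H (m+1) - ((m:ℝ)+1))/((m:ℝ)+1)^4 := by
        rw [Summable.tsum_prod' hK hKslice]
        exact tsum_congr hKsum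
    _ = ∑' m : ℕ, (H (m+1)/((m:ℝ)+1)^3 + H (m+1)/((m:ℝ)+1)^4 - 1/((m:ℝ)+1)^3) := by
        apply tsum_congr
        intro m
        have hx : ((m:ℝ)+1) ≠ 0 := by positivity
        field_simp
        ring
    _ = zetaH 3 + zetaH 4 - zeta 3 := by
        unfold zetaH zeta
        rw [Summable.tsum_sub (((summable_zetaH (s := 3) le_rfl)).add (summable_zetaH (s := 4) (by norm_num)))
          (summable_pow (p := 3) (by norm_num)),
          Summable.tsum_add (summable_zetaH (s := 3) le_rfl) (summable_zetaH (s := 4) (by norm_num))]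

end S13

theorem stmt13 :
    ∑' n : ℕ, H (n + 1) * hzeta 4 (n + 1) =
      (5 / 4) * zeta 4 + 3 * zeta 5 - zeta 2 * zeta 3 - zeta 3 := by
  rw [S13.key, S13.zetaH3_eq, S13.zetaH4_eq]
  ring
end
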